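/- Let U : ℕ → ℕ → Bool and k : ℕ → ℕ → ℕ → ℕ be computable functions such that every x ∈ ℕ belongs to some U_n = {z ∈ ℕ : U n z = true}, and whenever x ∈ U_m ∩ U_n then x ∈ U_{k x m n} ⊆ U_m ∩ U_n. Suppose there is a computable function e : ℕ → ℕ → ℕ × ℕ such that for all distinct x, y ∈ ℕ, if e x y = (m, n) then x ∈ U_m, y ∈ U_n, and U_m ∩ U_n = ∅ (the space is effectively Hausdorff), and suppose the topology τ on ℕ generated by the sets U_n is not discrete (some singleton {p} is not τ-open). Then there is an infinite computable set Y ⊆ ℕ and a computable function d : ℕ → ℕ such that U_{d x} ∩ Y = {x} for every x ∈ Y (an infinite computable effectively discrete subspace). -/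

import Mathlib

/-- The topology on ℕ generated by a computably presented countable family of basic sets
`U n = {z | U n z = true}` (a CSC space presentation). -/
def cscTop (U : ℕ → ℕ → Bool) : TopologicalSpace ℕ :=
  TopologicalSpace.generateFrom {s | ∃ n : ℕ, s = {z | U n z = true}}

private lemma computable_nat_find' {f : ℕ → ℕ → Bool} (hf : Computable₂ f)
    (H : ∀ a, ∃ n, f a n = true) :
    Computable fun a => Nat.find (H a) := by
  have hp : Partrec₂ fun (a n : ℕ) => (Part.some (f a n) : Part Bool) := hf.partrec₂
  refine (Partrec.rfind hp).of_eq fun a => ?_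
  have hmem : Nat.find (H a) ∈ Nat.rfind fun n => Part.some (f a n) := by
    refine (Nat.mem_rfind (p := fun n => Part.some (f a n))).2 ?_
    constructor
    · simpa using Nat.find_spec (H a)
    · intro m hm
      simpa using Nat.find_min (H a) hm
  exact Part.eq_some_iff.2 hmem

/-- Boolean search predicate: a point of `U n` different from `p` (trivial if `p ∉ U n`). -/
private def Qb (U : ℕ → ℕ → Bool) (p n z : ℕ) : Bool :=
  bif U n p then (bif decide (z = p) then false else U n z) else true

private lemma Qb_true_iff (U : ℕ → ℕ → Bool) (p n z : ℕ) :
    Qb U p n z = true ↔ (U n p = true → (z ≠ p ∧ U n z = true)) := by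
  cases h : U n p <;> by_cases hz : z = p <;> simp [Qb, h, hz]

/-- Boolean search predicate for inverting an increasing enumeration. -/
private def Rb (y : ℕ → ℕ) (x i : ℕ) : Bool :=
  bif decide (y i = x) then true else decide (i = x)

private lemma Rb_true_iff (y : ℕ → ℕ) (x i : ℕ) :
    Rb y x i = true ↔ (y i = x ∨ i = x) := by
  by_cases h1 : y i = x <;> by_cases h2 : i = x <;> simp [Rb, h1, h2]

/-- Iteration of a step function. -/
private def iterF (step : ℕ → ℕ) (n0 : ℕ) : ℕ → ℕ
  | 0 => n0
  | i + 1 => step (iterF step n0 i)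

private lemma computable_iterF {step : ℕ → ℕ} (n0 : ℕ) (hs : Computable step) :
    Computable (iterF step n0) := by
  have h := Computable.nat_rec (f := fun i : ℕ => i) (g := fun _ : ℕ => n0)
    (h := fun (_ : ℕ) (q : ℕ × ℕ) => step q.2) Computable.id (Computable.const n0)
    ((hs.comp (Computable.snd.comp Computable.snd)).to₂)
  refine h.of_eq fun a => ?_
  induction a with
  | zero => rfl
  | succ i ih =>
    show step _ = _
    rw [ih, iterF]

/-- Every infinite computable effectively Hausdorff CSC space which is not discrete has an
infinite computable effectively discrete subspace: if `e` computably witnesses disjoint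
basic neighborhoods of distinct points and some singleton `{p}` is not open, then there are
an infinite computable `Y ⊆ ℕ` and a computable `d` with `U_{d x} ∩ Y = {x}` for `x ∈ Y`. -/
theorem effectively_hausdorff_not_discrete_effectively_discrete_subspace
    (U : ℕ → ℕ → Bool) (k : ℕ → ℕ → ℕ → ℕ) (e : ℕ → ℕ → ℕ × ℕ)
    (hU : Computable₂ U)
    (hk : Computable fun p : ℕ × ℕ × ℕ => k p.1 p.2.1 p.2.2)
    (he : Computable₂ e)
    (hcover : ∀ x : ℕ, ∃ n, U n x = true)
    (hinter : ∀ x m n : ℕ, U m x = true → U n x = true →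
      U (k x m n) x = true ∧ ∀ z, U (k x m n) z = true → U m z = true ∧ U n z = true)
    (hHaus : ∀ x y : ℕ, x ≠ y →
      U (e x y).1 x = true ∧ U (e x y).2 y = true ∧
      {z | U (e x y).1 z = true} ∩ {z | U (e x y).2 z = true} = ∅)
    (hnotdisc : ∃ p : ℕ, ¬ @IsOpen ℕ (cscTop U) {p}) :
    ∃ (Y : Set ℕ) (d : ℕ → ℕ),
      Y.Infinite ∧ ComputablePred (· ∈ Y) ∧ Computable d ∧
      ∀ x ∈ Y, {z | U (d x) z = true} ∩ Y = {x} := by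
  classical
  obtain ⟨p, hp⟩ := hnotdisc
  -- every basic neighborhood of p contains a point other than p
  have key : ∀ n, U n p = true → ∃ z, z ≠ p ∧ U n z = true := by
    intro n hn
    by_contra hcon
    push_neg at hcon
    apply hp
    have hset : ({p} : Set ℕ) = {z | U n z = true} := by
      ext z
      simp only [Set.mem_singleton_iff, Set.mem_setOf_eq]
      constructor
      · rintro rfl; exact hn
      · intro hz; by_contra hzp; exact hcon z hzp hz
    rw [hset]
    exact TopologicalSpace.isOpen_generateFrom_of_mem ⟨n, rfl⟩
  -- the search predicate always has a witness
  have hex : ∀ n, ∃ z, Qb U p n z = true := by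
    intro n
    by_cases hn : U n p = true
    · obtain ⟨z, hz1, hz2⟩ := key n hn
      exact ⟨z, (Qb_true_iff U p n z).mpr fun _ => ⟨hz1, hz2⟩⟩
    · exact ⟨0, (Qb_true_iff U p n 0).mpr fun h => absurd h hn⟩
  set pick : ℕ → ℕ := fun n => Nat.find (hex n) with hpickdef
  have hps : ∀ n, U n p = true → pick n ≠ p ∧ U n (pick n) = true := by
    intro n hn
    exact (Qb_true_iff U p n _).mp (Nat.find_spec (hex n)) hn
  have hmin : ∀ n z, z ≠ p → U n z = true → pick n ≤ z := by
    intro n z hzp hz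
    exact Nat.find_min' (hex n) ((Qb_true_iff U p n z).mpr fun _ => ⟨hzp, hz⟩)
  -- the decreasing sequence of neighborhoods of p
  set n0 : ℕ := Nat.find (hcover p) with hn0def
  have hn0 : U n0 p = true := Nat.find_spec (hcover p)
  set step : ℕ → ℕ := fun m => k p m (e p (pick m)).1 with hstepdef
  set N : ℕ → ℕ := iterF step n0 with hNdef
  have hNsucc : ∀ i, N (i + 1) = k p (N i) (e p (pick (N i))).1 := fun i => rfl
  set y : ℕ → ℕ := fun i => pick (N i) with hydef
  have hNp : ∀ i, U (N i) p = true := by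
    intro i
    induction i with
    | zero => exact hn0
    | succ i ih =>
      have hy := hps (N i) ih
      have hh := hHaus p (y i) (Ne.symm hy.1)
      rw [hNsucc]
      exact (hinter p (N i) (e p (y i)).1 ih hh.1).1
  have hyp : ∀ i, y i ≠ p ∧ U (N i) (y i) = true := fun i => hps (N i) (hNp i)
  have hysep : ∀ i, U ((e p (y i)).2) (y i) = true :=
    fun i => (hHaus p (y i) (Ne.symm (hyp i).1)).2.1
  have hdisj : ∀ i z, U ((e p (y i)).1) z = true → U ((e p (y i)).2) z = true → False := by
    intro i z h1 h2
    have hh := (hHaus p (y i) (Ne.symm (hyp i).1)).2.2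
    have : z ∈ ({z | U ((e p (y i)).1) z = true} ∩ {z | U ((e p (y i)).2) z = true}) := ⟨h1, h2⟩
    rw [hh] at this
    exact this
  have hsub : ∀ i z, U (N (i + 1)) z = true →
      U (N i) z = true ∧ U ((e p (y i)).1) z = true := by
    intro i z hz
    have hh := hHaus p (y i) (Ne.symm (hyp i).1)
    rw [hNsucc] at hz
    exact (hinter p (N i) (e p (y i)).1 (hNp i) hh.1).2 z hz
  have hnot : ∀ i, ¬ U (N (i + 1)) (y i) = true := by
    intro i h
    exact hdisj i (y i) (hsub i (y i) h).2 (hysep i)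
  have hchain : ∀ i j, i ≤ j → ∀ z, U (N j) z = true → U (N i) z = true := by
    intro i j hij
    induction j with
    | zero => intro z hz; rw [Nat.le_zero.mp hij]; exact hz
    | succ j ih =>
      rcases Nat.lt_or_ge i (j + 1) with h | h
      · intro z hz
        exact ih (Nat.lt_succ_iff.mp h) z (hsub j z hz).1
      · intro z hz
        rw [le_antisymm hij h]
        exact hz
  have hlt : ∀ i, y i < y (i + 1) := by
    intro i
    have h1 : U (N i) (y (i + 1)) = true := (hsub i (y (i + 1)) (hyp (i + 1)).2).1
    have hle : y i ≤ y (i + 1) := hmin (N i) (y (i + 1)) (hyp (i + 1)).1 h1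
    rcases lt_or_eq_of_le hle with h | h
    · exact h
    · exact absurd (h ▸ (hyp (i + 1)).2) (hnot i)
  have hsm : StrictMono y := strictMono_nat_of_lt_succ hlt
  -- the inverse search
  have hinvex : ∀ x, ∃ i, Rb y x i = true := by
    intro x
    exact ⟨x, (Rb_true_iff y x x).mpr (Or.inr rfl)⟩
  set inv : ℕ → ℕ := fun x => Nat.find (hinvex x) with hinvdef
  have hmem : ∀ x, x ∈ Set.range y ↔ y (inv x) = x := by
    intro x
    constructor
    · rintro ⟨i, rfl⟩
      have h0 : y (inv (y i)) = y i ∨ inv (y i) = y i :=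
        (Rb_true_iff y (y i) _).mp (Nat.find_spec (hinvex (y i)))
      rcases h0 with h | h
      · exact h
      · have hle : inv (y i) ≤ i :=
          Nat.find_min' (hinvex (y i)) ((Rb_true_iff y (y i) i).mpr (Or.inl rfl))
        have hix : i ≤ y i := hsm.le_apply
        have : inv (y i) = i := by omega
        rw [this]
    · intro h; exact ⟨_, h⟩
  have hinvy : ∀ i, inv (y i) = i := by
    intro i
    have := (hmem (y i)).mp ⟨i, rfl⟩
    exact hsm.injective this
  -- the separating function
  set d : ℕ → ℕ := fun x => k x (e p x).2 (N (inv x)) with hddef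
  refine ⟨Set.range y, d, ?_, ?_, ?_, ?_⟩
  · exact Set.infinite_range_of_injective hsm.injective
  -- computability facts
  · have hQc : Computable₂ (Qb U p) := by
      have hc1 : Computable fun q : ℕ × ℕ => U q.1 p := hU.comp Computable.fst (.const p)
      have hc2 : Computable fun q : ℕ × ℕ => (decide (q.2 = p) : Bool) :=
        Primrec.eq.decide.to_comp.comp Computable.snd (.const p)
      have hc3 : Computable fun q : ℕ × ℕ => U q.1 q.2 := hU.comp Computable.fst Computable.snd
      exact (hc1.cond (hc2.cond (Computable.const false) hc3) (Computable.const true)).to₂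
    have hpickc : Computable pick := computable_nat_find' hQc hex
    have hstepc : Computable step :=
      hk.comp ((Computable.const p).pair (Computable.id.pair
        (Computable.fst.comp (he.comp (.const p) hpickc))))
    have hNc : Computable N := computable_iterF n0 hstepc
    have hyc : Computable y := hpickc.comp hNc
    have hRc : Computable₂ (Rb y) := by
      have hc1 : Computable fun q : ℕ × ℕ => (decide (y q.2 = q.1) : Bool) :=
        Primrec.eq.decide.to_comp.comp (hyc.comp Computable.snd) Computable.fst
      have hc2 : Computable fun q : ℕ × ℕ => (decide (q.2 = q.1) : Bool) :=
        Primrec.eq.decide.to_comp.comp Computable.snd Computable.fst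
      exact (hc1.cond (Computable.const true) hc2).to₂
    have hinvc : Computable inv := computable_nat_find' hRc hinvex
    rw [ComputablePred.computable_iff]
    refine ⟨fun x => decide (y (inv x) = x), ?_, ?_⟩
    · exact Primrec.eq.decide.to_comp.comp (hyc.comp hinvc) Computable.id
    · funext x
      simp [hmem x]
  · have hQc : Computable₂ (Qb U p) := by
      have hc1 : Computable fun q : ℕ × ℕ => U q.1 p := hU.comp Computable.fst (.const p)
      have hc2 : Computable fun q : ℕ × ℕ => (decide (q.2 = p) : Bool) :=
        Primrec.eq.decide.to_comp.comp Computable.snd (.const p)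
      have hc3 : Computable fun q : ℕ × ℕ => U q.1 q.2 := hU.comp Computable.fst Computable.snd
      exact (hc1.cond (hc2.cond (Computable.const false) hc3) (Computable.const true)).to₂
    have hpickc : Computable pick := computable_nat_find' hQc hex
    have hstepc : Computable step :=
      hk.comp ((Computable.const p).pair (Computable.id.pair
        (Computable.fst.comp (he.comp (.const p) hpickc))))
    have hNc : Computable N := computable_iterF n0 hstepc
    have hyc : Computable y := hpickc.comp hNc
    have hRc : Computable₂ (Rb y) := by
      have hc1 : Computable fun q : ℕ × ℕ => (decide (y q.2 = q.1) : Bool) :=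
        Primrec.eq.decide.to_comp.comp (hyc.comp Computable.snd) Computable.fst
      have hc2 : Computable fun q : ℕ × ℕ => (decide (q.2 = q.1) : Bool) :=
        Primrec.eq.decide.to_comp.comp Computable.snd Computable.fst
      exact (hc1.cond (Computable.const true) hc2).to₂
    have hinvc : Computable inv := computable_nat_find' hRc hinvex
    exact hk.comp (Computable.id.pair
      ((Computable.snd.comp (he.comp (.const p) Computable.id)).pair (hNc.comp hinvc)))
  -- the separation property
  · rintro x ⟨i, rfl⟩
    have hdx : d (y i) = k (y i) (e p (y i)).2 (N i) := by
      rw [hddef]; simp only []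
      rw [hinvy i]
    have hint := hinter (y i) (e p (y i)).2 (N i) (hysep i) (hyp i).2
    ext z
    simp only [Set.mem_inter_iff, Set.mem_setOf_eq, Set.mem_singleton_iff]
    constructor
    · rintro ⟨hz1, ⟨j, rfl⟩⟩
      rw [hdx] at hz1
      have hz2 := hint.2 (y j) hz1
      rcases Nat.lt_trichotomy j i with h | h | h
      · exfalso
        have : U (N (j + 1)) (y j) = true := hchain (j + 1) i h (y j) hz2.2
        exact hnot j this
      · rw [h]
      · exfalso
        have h1 : U (N (i + 1)) (y j) = true := hchain (i + 1) j h (y j) (hyp j).2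
        exact hdisj i (y j) (hsub i (y j) h1).2 hz2.1
    · rintro rfl
      refine ⟨?_, ⟨i, rfl⟩⟩
      rw [hdx]
      exact hint.1
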